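/- For all real constants a ≥ 0 and b ≥ 0, the function q(x) = x · log(1 + a + b/x) is concave on the interval (0, ∞). -/

import Mathlib

open Real Set

private lemma aux_pos {a b x : ℝ} (ha : 0 ≤ a) (hb : 0 ≤ b) (hx : 0 < x) :
    0 < 1 + a + b / x := by positivity

private lemma aux_lin_pos {a b x : ℝ} (ha : 0 ≤ a) (hb : 0 ≤ b) (hx : 0 < x) :
    0 < (1 + a) * x + b := by positivity

private lemma hasDerivAt_f {a b : ℝ} (ha : 0 ≤ a) (hb : 0 ≤ b) {x : ℝ} (hx : 0 < x) :
    HasDerivAt (fun x : ℝ => x * Real.log (1 + a + b / x))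
      (Real.log (1 + a + b / x) - b / ((1 + a) * x + b)) x := by
  have hx' : x ≠ 0 := hx.ne'
  have h1 : HasDerivAt (fun x : ℝ => 1 + a + b / x) (-b / x ^ 2) x := by
    have := ((hasDerivAt_inv hx').const_mul b).const_add (1 + a)
    simpa [div_eq_mul_inv, neg_div, mul_comm] using this
  have h2 : HasDerivAt (fun x : ℝ => Real.log (1 + a + b / x))
      (-b / x ^ 2 / (1 + a + b / x)) x := h1.log (aux_pos ha hb hx).ne'
  have h3 := (hasDerivAt_id x).mul h2
  refine h3.congr_deriv ?_
  have hne := (aux_pos ha hb hx).ne'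
  have hne2 := (aux_lin_pos ha hb hx).ne'
  rw [id_eq]
  field_simp
  ring

private lemma hasDerivAt_g {a b : ℝ} (ha : 0 ≤ a) (hb : 0 ≤ b) {x : ℝ} (hx : 0 < x) :
    HasDerivAt (fun x : ℝ => Real.log (1 + a + b / x) - b / ((1 + a) * x + b))
      (-(b ^ 2) / (x * ((1 + a) * x + b) ^ 2)) x := by
  have hx' : x ≠ 0 := hx.ne'
  have h1 : HasDerivAt (fun x : ℝ => 1 + a + b / x) (-b / x ^ 2) x := by
    have := ((hasDerivAt_inv hx').const_mul b).const_add (1 + a)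
    simpa [div_eq_mul_inv, neg_div, mul_comm] using this
  have h2 : HasDerivAt (fun x : ℝ => Real.log (1 + a + b / x))
      (-b / x ^ 2 / (1 + a + b / x)) x := h1.log (aux_pos ha hb hx).ne'
  have h3 : HasDerivAt (fun x : ℝ => (1 + a) * x + b) (1 + a) x := by
    simpa using ((hasDerivAt_id x).const_mul (1 + a)).add_const b
  have h4 : HasDerivAt (fun x : ℝ => b / ((1 + a) * x + b))
      ((0 * ((1 + a) * x + b) - b * (1 + a)) / ((1 + a) * x + b) ^ 2) x :=
    (hasDerivAt_const x b).div h3 (aux_lin_pos ha hb hx).ne'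
  have h5 := h2.sub h4
  refine h5.congr_deriv ?_
  have hne := (aux_pos ha hb hx).ne'
  have hne2 := (aux_lin_pos ha hb hx).ne'
  field_simp
  ring

/-- For all real constants `a ≥ 0` and `b ≥ 0`, the function
`q(x) = x * log (1 + a + b / x)` is concave on the interval `(0, ∞)`. -/
theorem concave_x_mul_log_one_add_div (a b : ℝ) (ha : 0 ≤ a) (hb : 0 ≤ b) :
    ConcaveOn ℝ (Set.Ioi (0 : ℝ)) (fun x : ℝ => x * Real.log (1 + a + b / x)) := by
  have hderiv : ∀ x ∈ Set.Ioi (0 : ℝ),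
      deriv (fun x : ℝ => x * Real.log (1 + a + b / x)) x
        = Real.log (1 + a + b / x) - b / ((1 + a) * x + b) := fun x hx =>
    (hasDerivAt_f ha hb hx).deriv
  have hEq : Set.EqOn (deriv (fun x : ℝ => x * Real.log (1 + a + b / x)))
      (fun x : ℝ => Real.log (1 + a + b / x) - b / ((1 + a) * x + b)) (Set.Ioi 0) := hderiv
  apply concaveOn_of_deriv2_nonpos' (convex_Ioi 0)
  · intro x hx
    exact (hasDerivAt_f ha hb hx).differentiableAt.differentiableWithinAt
  · intro x hx
    have : DifferentiableAt ℝ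
        (fun x : ℝ => Real.log (1 + a + b / x) - b / ((1 + a) * x + b)) x :=
      (hasDerivAt_g ha hb hx).differentiableAt
    exact (this.congr_of_eventuallyEq
      ((isOpen_Ioi.eventually_mem hx).mono (fun y hy => hEq hy))).differentiableWithinAt
  · intro x hx
    have heq : deriv (deriv (fun x : ℝ => x * Real.log (1 + a + b / x))) x
        = -(b ^ 2) / (x * ((1 + a) * x + b) ^ 2) := by
      rw [Filter.EventuallyEq.deriv_eq
        ((isOpen_Ioi.eventually_mem hx).mono (fun y hy => hEq hy))]
      exact (hasDerivAt_g ha hb hx).deriv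
    simp only [Function.iterate_succ, Function.iterate_zero, Function.comp_apply, id]
    rw [heq]
    have hx' : (0:ℝ) < x := hx
    have h1 : 0 < x * ((1 + a) * x + b) ^ 2 := by positivity
    exact div_nonpos_of_nonpos_of_nonneg (neg_nonpos.mpr (by positivity)) h1.le
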